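/- If F : S → T is a surjective semigroup homomorphism, then the induced map φ_s ↦ φ_{F(s)} extends to a well-defined surjective semigroup homomorphism Cayley(S) → Cayley(T). -/

import Mathlib

/-- φ_s([a_1,...,a_n]) = [s a_1, s a_1 a_2, ..., s a_1 ⋯ a_n] -/
def phi {S : Type*} [Mul S] (s : S) (l : List S) : List S :=
  (l.scanl (· * ·) s).tail

/-- Cayley(S): the subsemigroup of functions on words over S¹ = WithOne S
(under composition) generated by the maps φ_s, s ∈ S. -/
def Cayley (S : Type*) [Semigroup S] : Subsemigroup (Function.End (List (WithOne S))) :=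
  Subsemigroup.closure {f | ∃ s : S, f = phi (s : WithOne S)}

/-- A surjective semigroup morphism F : S → T induces a well-defined surjective
semigroup morphism Cayley(S) → Cayley(T) sending φ_s to φ_{F(s)}. -/
theorem cayley_quotient {S T : Type*} [Semigroup S] [Semigroup T]
    (F : S →ₙ* T) (hF : Function.Surjective F) :
    ∃ Φ : Cayley S →ₙ* Cayley T, Function.Surjective Φ ∧
      ∀ s : S, Φ ⟨phi (s : WithOne S), Subsemigroup.subset_closure ⟨s, rfl⟩⟩ =
        ⟨phi (F s : WithOne T), Subsemigroup.subset_closure ⟨F s, rfl⟩⟩ := by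
  classical
  set F1 : WithOne S →* WithOne T := WithOne.mapMulHom F with hF1def
  have hF1 : Function.Surjective F1 := by
    intro t
    rcases t with _ | x
    · exact ⟨1, map_one F1⟩
    · obtain ⟨s, hs⟩ := hF x
      exact ⟨(s : WithOne S), by simp [hF1def, hs]; rfl⟩
  have hmap : Function.Surjective (List.map F1) := fun l => by
    induction l with
    | nil => exact ⟨[], rfl⟩
    | cons x l ih =>
      obtain ⟨l', hl'⟩ := ih
      obtain ⟨x', hx'⟩ := hF1 x
      exact ⟨x' :: l', by simp [hl', hx']⟩
  have hscan : ∀ (l : List (WithOne S)) (a : WithOne S),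
      List.scanl (· * ·) (F1 a) (l.map F1) = (List.scanl (· * ·) a l).map F1 := by
    intro l
    induction l with
    | nil => intro a; simp
    | cons x l ih => intro a; simp [List.scanl_cons, ← map_mul, ih]
  have hphi : ∀ (a : WithOne S) (l : List (WithOne S)),
      phi (F1 a) (l.map F1) = (phi a l).map F1 := by
    intro a l
    simp [phi, hscan, List.map_tail]
  -- intertwining relation
  let Int : Function.End (List (WithOne S)) → Function.End (List (WithOne T)) → Prop :=
    fun f g => ∀ l, g (List.map F1 l) = List.map F1 (f l)
  have huniq : ∀ {f g g'}, Int f g → Int f g' → g = g' := by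
    intro f g g' h h'
    funext l
    obtain ⟨l', rfl⟩ := hmap l
    rw [h l', h' l']
  have hcoe : ∀ s : S, F1 (s : WithOne S) = (F s : WithOne T) := by
    intro s; simp [hF1def]
  have hexists : ∀ f ∈ Cayley S, ∃ g, g ∈ Cayley T ∧ Int f g := by
    intro f hf
    induction hf using Subsemigroup.closure_induction with
    | mem f hf =>
      obtain ⟨s, rfl⟩ := hf
      refine ⟨phi (F s : WithOne T), Subsemigroup.subset_closure ⟨F s, rfl⟩, ?_⟩
      intro l
      have := hphi (s : WithOne S) l
      rwa [hcoe] at this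
    | mul f1 f2 h1 h2 ih1 ih2 =>
      obtain ⟨g1, hg1, hi1⟩ := ih1
      obtain ⟨g2, hg2, hi2⟩ := ih2
      refine ⟨g1 * g2, mul_mem hg1 hg2, ?_⟩
      intro l
      show g1 (g2 (List.map F1 l)) = List.map F1 (f1 (f2 l))
      rw [hi2 l, hi1 (f2 l)]
  let Φ0 : Cayley S → Cayley T := fun f =>
    ⟨(hexists f.1 f.2).choose, (hexists f.1 f.2).choose_spec.1⟩
  have hΦ0 : ∀ f : Cayley S, Int f.1 (Φ0 f).1 := fun f => (hexists f.1 f.2).choose_spec.2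
  have hmul : ∀ f1 f2 : Cayley S, Φ0 (f1 * f2) = Φ0 f1 * Φ0 f2 := by
    intro f1 f2
    apply Subtype.ext
    apply huniq (hΦ0 (f1 * f2))
    intro l
    show (Φ0 f1).1 ((Φ0 f2).1 (List.map F1 l)) = List.map F1 (f1.1 (f2.1 l))
    rw [hΦ0 f2 l, hΦ0 f1 (f2.1 l)]
  refine ⟨⟨Φ0, hmul⟩, ?_, ?_⟩
  · intro g
    have : ∀ h ∈ Cayley T, ∃ f : Cayley S, (Φ0 f).1 = h := by
      intro h hh
      induction hh using Subsemigroup.closure_induction with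
      | mem h hh =>
        obtain ⟨t, rfl⟩ := hh
        obtain ⟨s, rfl⟩ := hF t
        refine ⟨⟨phi (s : WithOne S), Subsemigroup.subset_closure ⟨s, rfl⟩⟩, ?_⟩
        apply huniq (hΦ0 _)
        intro l
        have := hphi (s : WithOne S) l
        rwa [hcoe] at this
      | mul h1 h2 hm1 hm2 ih1 ih2 =>
        obtain ⟨f1, hf1⟩ := ih1
        obtain ⟨f2, hf2⟩ := ih2
        refine ⟨f1 * f2, ?_⟩
        show (Φ0 (f1 * f2)).1 = h1 * h2
        rw [hmul]
        show (Φ0 f1).1 * (Φ0 f2).1 = h1 * h2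
        rw [hf1, hf2]
    obtain ⟨f, hf⟩ := this g.1 g.2
    exact ⟨f, Subtype.ext hf⟩
  · intro s
    apply Subtype.ext
    apply huniq (hΦ0 _)
    intro l
    have := hphi (s : WithOne S) l
    rwa [hcoe] at this
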